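/- A family 𝔍 of subsets of N = {1,…,n} equals the cofinality class 𝔠(f) of some continuous map f : 𝖱^n → 𝖱 if and only if 𝔍 ⊆ 𝒫(N)∖{∅} and 𝔍 is upward closed, i.e., whenever I ∈ 𝔍 and I ⊆ J ⊆ N then J ∈ 𝔍. Consequently, the cofinality classes of continuous maps 𝖱^n → 𝖱 are in bijection with the antichains of 𝒫(N)∖{∅}, each class corresponding to the antichain of its minimal elements (the empty antichain corresponding to bounded maps). -/

import Mathlib

noncomputable section
open Set

/-- The first uncountable ordinal `ω₁`. -/
def Omega1 : Ordinal := Ordinal.omega 1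

/-- The closed long ray `𝖱`: `ω₁ × [0,1)` with the lexicographic order. -/
def LongRay : Type 1 := {o : Ordinal // o < Omega1} ×ₗ (Set.Ico (0:ℝ) 1)

instance : LinearOrder LongRay :=
  inferInstanceAs (LinearOrder ({o : Ordinal // o < Omega1} ×ₗ (Set.Ico (0:ℝ) 1)))

/-- `𝖱` carries the order topology. -/
instance : TopologicalSpace LongRay := Preorder.topology LongRay
instance : OrderTopology LongRay := ⟨rfl⟩

lemma omega1_pos : (0 : Ordinal) < Omega1 := Ordinal.omega_pos 1

/-- The point `0 = (0,0)` of the long ray. -/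
def rayZero : LongRay := toLex (⟨0, omega1_pos⟩, ⟨0, by simp⟩)

/-- Identification of the countable ordinal `o` with the point `(o,0)` of the long ray
(junk value for `o ≥ ω₁`). -/
def ordR (o : Ordinal) : LongRay :=
  if h : o < Omega1 then toLex (⟨o, h⟩, ⟨0, by simp⟩) else rayZero

/-- The `I`-diagonal at height `c` (only the values of `c` off `I` are relevant). -/
def Delta (n : ℕ) (I : Finset (Fin n)) (c : Fin n → LongRay) : Set (Fin n → LongRay) :=
  {x | (∀ i ∈ I, ∀ i' ∈ I, x i = x i') ∧ ∀ j ∉ I, x j = c j}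

/-- `f` is `I`-cofinal if `f` restricted to `Δ_I = Δ_I(0)` is unbounded. -/
def ICofinal (n : ℕ) (f : (Fin n → LongRay) → LongRay) (I : Finset (Fin n)) : Prop :=
  ¬ BddAbove (f '' Delta n I (fun _ => rayZero))

/-- The cofinality class `𝔠(f) = {I : f is I-cofinal}`. -/
def cofClass (n : ℕ) (f : (Fin n → LongRay) → LongRay) : Set (Finset (Fin n)) :=
  {I | ICofinal n f I}

/-- `M_I(c) = {x : x_i ≥ c for all i ∈ I}`. -/
def MSet (n : ℕ) (I : Finset (Fin n)) (c : LongRay) : Set (Fin n → LongRay) :=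
  {x | ∀ i ∈ I, c ≤ x i}

/-- `E_I(b,d) = {x ∈ M_I(d) : x_j = b_j for all j ∉ I}`. -/
def ESet (n : ℕ) (I : Finset (Fin n)) (b : Fin n → LongRay) (d : LongRay) :
    Set (Fin n → LongRay) :=
  {x | (∀ i ∈ I, d ≤ x i) ∧ ∀ j ∉ I, x j = b j}

namespace LongRayAux

lemma omega1_eq_ord : Omega1 = (Cardinal.aleph 1).ord := (Cardinal.ord_aleph 1).symm

/-- ordinal part -/
def op (x : LongRay) : Ordinal := ((ofLex x).1 : Ordinal)
lemma op_lt (x : LongRay) : op x < Omega1 := (ofLex x).1.2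
/-- real part -/
def rp (x : LongRay) : ℝ := ((ofLex x).2 : ℝ)
lemma rp_mem (x : LongRay) : rp x ∈ Set.Ico (0:ℝ) 1 := (ofLex x).2.2
lemma rp_nonneg (x : LongRay) : 0 ≤ rp x := (rp_mem x).1
lemma rp_lt_one (x : LongRay) : rp x < 1 := (rp_mem x).2

def mk (o : Ordinal) (h : o < Omega1) (r : ℝ) (hr : 0 ≤ r ∧ r < 1) : LongRay :=
  toLex (⟨o, h⟩, ⟨r, hr⟩)

@[simp] lemma op_mk (o h r hr) : op (mk o h r hr) = o := rfl
@[simp] lemma rp_mk (o h r hr) : rp (mk o h r hr) = r := rfl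

lemma mk_op_rp (x : LongRay) : mk (op x) (op_lt x) (rp x) (rp_mem x) = x := rfl

lemma le_iff {x y : LongRay} : x ≤ y ↔ op x < op y ∨ (op x = op y ∧ rp x ≤ rp y) := by
  have := Prod.Lex.le_iff (x := x) (y := y)
  refine this.trans ?_
  constructor
  · rintro (h | ⟨h1, h2⟩)
    · exact Or.inl h
    · exact Or.inr ⟨congrArg Subtype.val h1, h2⟩
  · rintro (h | ⟨h1, h2⟩)
    · exact Or.inl h
    · exact Or.inr ⟨Subtype.ext h1, h2⟩

lemma lt_iff {x y : LongRay} : x < y ↔ op x < op y ∨ (op x = op y ∧ rp x < rp y) := by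
  have := Prod.Lex.lt_iff (x := x) (y := y)
  refine this.trans ?_
  constructor
  · rintro (h | ⟨h1, h2⟩)
    · exact Or.inl h
    · exact Or.inr ⟨congrArg Subtype.val h1, h2⟩
  · rintro (h | ⟨h1, h2⟩)
    · exact Or.inl h
    · exact Or.inr ⟨Subtype.ext h1, h2⟩

lemma rayZero_le (x : LongRay) : rayZero ≤ x := by
  rw [le_iff]
  rcases eq_or_ne (op x) 0 with h | h
  · exact Or.inr ⟨h.symm, rp_nonneg x⟩
  · exact Or.inl (pos_iff_ne_zero.2 h)

instance : OrderBot LongRay where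
  bot := rayZero
  bot_le := rayZero_le

lemma bot_def : (⊥ : LongRay) = rayZero := rfl

instance : NoMaxOrder LongRay := by
  constructor
  intro x
  refine ⟨mk (op x) (op_lt x) ((rp x + 1)/2) ⟨by nlinarith [rp_nonneg x], by nlinarith [rp_lt_one x]⟩, ?_⟩
  rw [lt_iff]
  refine Or.inr ⟨rfl, ?_⟩
  rw [rp_mk]
  nlinarith [rp_lt_one x]

instance : DenselyOrdered LongRay := by
  constructor
  intro x y hxy
  rcases lt_iff.1 hxy with h | ⟨h1, h2⟩
  · refine ⟨mk (op x) (op_lt x) ((rp x + 1)/2) ⟨by nlinarith [rp_nonneg x], by nlinarith [rp_lt_one x]⟩, ?_, ?_⟩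
    · refine lt_iff.2 (Or.inr ⟨rfl, ?_⟩); rw [rp_mk]; nlinarith [rp_lt_one x]
    · exact lt_iff.2 (Or.inl h)
  · have h0 := rp_nonneg x
    have h1' := rp_lt_one y
    refine ⟨mk (op x) (op_lt x) ((rp x + rp y)/2) ⟨by nlinarith, by nlinarith⟩, ?_, ?_⟩
    · refine lt_iff.2 (Or.inr ⟨rfl, ?_⟩); rw [rp_mk]; linarith
    · refine lt_iff.2 (Or.inr ⟨h1, ?_⟩); rw [rp_mk]; linarith

/-- countable subsets of the long ray are bounded above -/
lemma bddAbove_of_countable {S : Set LongRay} (hS : S.Countable) : BddAbove S := by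
  rcases S.eq_empty_or_nonempty with rfl | hne
  · exact bddAbove_empty
  · have : Countable S := hS.to_subtype
    have : Nonempty S := hne.to_subtype
    obtain ⟨g, hg⟩ := exists_surjective_nat S
    set σ : Ordinal := iSup (fun k => op (g k : LongRay)) with hσ
    have hσlt : σ < Omega1 := by
      rw [omega1_eq_ord]
      rw [Cardinal.ord_aleph]
      exact Ordinal.iSup_lt_omega_one (fun k => by
        rw [← Cardinal.ord_aleph, ← omega1_eq_ord]; exact op_lt _)
    have hsucc : σ + 1 < Omega1 := by
      rw [omega1_eq_ord, Ordinal.add_one_eq_succ]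
      exact (Cardinal.isSuccLimit_ord (Cardinal.aleph0_le_aleph 1)).succ_lt (by rw [← omega1_eq_ord]; exact hσlt)
    refine ⟨mk (σ+1) hsucc 0 ⟨le_refl _, one_pos⟩, fun x hx => ?_⟩
    obtain ⟨k, hk⟩ := hg ⟨x, hx⟩
    rw [le_iff]
    left
    have : op x ≤ σ := by
      rw [hσ]
      have := le_ciSup (f := fun k => op (g k : LongRay)) (Ordinal.bddAbove_range _) k
      rw [hk] at this
      exact this
    rw [op_mk]
    calc op x ≤ σ := this
      _ < σ + 1 := by rw [Ordinal.add_one_eq_succ]; exact Order.lt_succ σ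

lemma exists_isLUB {S : Set LongRay} (hne : S.Nonempty) (hbd : BddAbove S) :
    ∃ z, IsLUB S z := by
  obtain ⟨u0, hu0⟩ := hbd
  set opU : Set Ordinal := {o | ∃ x ∈ upperBounds S, op x = o} with hopU
  have hopUne : opU.Nonempty := ⟨op u0, u0, hu0, rfl⟩
  set γ := sInf opU with hγdef
  have hγmem : γ ∈ opU := csInf_mem hopUne
  obtain ⟨x0, hx0U, hx0γ⟩ := hγmem
  set R : Set ℝ := rp '' {x ∈ upperBounds S | op x = γ} with hR
  have hRne : R.Nonempty := ⟨rp x0, x0, ⟨hx0U, hx0γ⟩, rfl⟩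
  have hRbd : BddBelow R := ⟨0, by rintro r ⟨x, _, rfl⟩; exact rp_nonneg x⟩
  set ρ := sInf R with hρdef
  have hρ0 : 0 ≤ ρ := le_csInf hRne (by rintro r ⟨x, _, rfl⟩; exact rp_nonneg x)
  have hρ1 : ρ < 1 := lt_of_le_of_lt (csInf_le hRbd ⟨x0, ⟨hx0U, hx0γ⟩, rfl⟩) (rp_lt_one x0)
  have hγlt : γ < Omega1 := hx0γ ▸ op_lt x0
  refine ⟨mk γ hγlt ρ ⟨hρ0, hρ1⟩, ?_, ?_⟩
  · -- upper bound
    intro s hs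
    by_contra hcon
    rw [not_le] at hcon
    rcases lt_iff.1 hcon with h | ⟨h1, h2⟩
    · rw [op_mk] at h
      have := hx0U hs
      rcases le_iff.1 this with h' | ⟨h', _⟩
      · exact absurd (h.trans (hx0γ ▸ h')) (lt_irrefl _)
      · rw [hx0γ] at h'; exact absurd (h' ▸ h) (lt_irrefl _)
    · rw [op_mk] at h1; rw [rp_mk] at h2
      obtain ⟨r, ⟨x, ⟨hxU, hxγ⟩, rfl⟩, hrlt⟩ := (csInf_lt_iff hRbd hRne).1 h2
      have := hxU hs
      rcases le_iff.1 this with h' | ⟨_, h'⟩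
      · rw [hxγ, ← h1] at h'; exact absurd h' (lt_irrefl _)
      · exact absurd (lt_of_le_of_lt h' hrlt) (lt_irrefl _)
  · -- least
    intro u hu
    have h1 : γ ≤ op u := csInf_le' ⟨u, hu, rfl⟩
    rcases eq_or_lt_of_le h1 with h | h
    · refine le_iff.2 (Or.inr ⟨by rw [op_mk, h], ?_⟩)
      rw [rp_mk]
      exact csInf_le hRbd ⟨u, ⟨hu, h.symm⟩, rfl⟩
    · exact le_iff.2 (Or.inl (by rw [op_mk]; exact h))

lemma exists_isGLB {S : Set LongRay} (hne : S.Nonempty) : ∃ z, IsGLB S z := by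
  obtain ⟨s0, hs0⟩ := hne
  set opS : Set Ordinal := op '' S with hopS
  set γ := sInf opS with hγdef
  have hγmem : γ ∈ opS := csInf_mem ⟨op s0, s0, hs0, rfl⟩
  obtain ⟨x0, hx0S, hx0γ⟩ := hγmem
  set R : Set ℝ := rp '' {x ∈ S | op x = γ} with hR
  have hRne : R.Nonempty := ⟨rp x0, x0, ⟨hx0S, hx0γ⟩, rfl⟩
  have hRbd : BddBelow R := ⟨0, by rintro r ⟨x, _, rfl⟩; exact rp_nonneg x⟩
  set ρ := sInf R with hρdef
  have hρ0 : 0 ≤ ρ := le_csInf hRne (by rintro r ⟨x, _, rfl⟩; exact rp_nonneg x)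
  have hρ1 : ρ < 1 := lt_of_le_of_lt (csInf_le hRbd ⟨x0, ⟨hx0S, hx0γ⟩, rfl⟩) (rp_lt_one x0)
  have hγlt : γ < Omega1 := hx0γ ▸ op_lt x0
  refine ⟨mk γ hγlt ρ ⟨hρ0, hρ1⟩, ?_, ?_⟩
  · intro s hs
    have h1 : γ ≤ op s := csInf_le' ⟨s, hs, rfl⟩
    rcases eq_or_lt_of_le h1 with h | h
    · refine le_iff.2 (Or.inr ⟨by rw [op_mk, ← h], ?_⟩)
      rw [rp_mk]
      exact csInf_le hRbd ⟨s, ⟨hs, h.symm⟩, rfl⟩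
    · exact le_iff.2 (Or.inl (by rw [op_mk]; exact h))
  · intro l hl
    have hlx0 : l ≤ x0 := hl hx0S
    rcases le_iff.1 hlx0 with h | ⟨h1, _⟩
    · exact le_iff.2 (Or.inl (by rw [op_mk, ← hx0γ]; exact h))
    · refine le_iff.2 (Or.inr ⟨by rw [op_mk, h1, hx0γ], ?_⟩)
      rw [rp_mk]
      refine le_csInf hRne ?_
      rintro r ⟨x, ⟨hxS, hxγ⟩, rfl⟩
      have := hl hxS
      rcases le_iff.1 this with h' | ⟨_, h'⟩
      · rw [h1, hx0γ, ← hxγ] at h'; exact absurd h' (lt_irrefl _)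
      · exact h'

open Classical in
def lrSSup (S : Set LongRay) : LongRay :=
  if h : S.Nonempty ∧ BddAbove S then (exists_isLUB h.1 h.2).choose else rayZero

open Classical in
def lrSInf (S : Set LongRay) : LongRay :=
  if h : S.Nonempty then (exists_isGLB h).choose else rayZero

instance : SupSet LongRay := ⟨lrSSup⟩
instance : InfSet LongRay := ⟨lrSInf⟩

lemma isLUB_sSup {S : Set LongRay} (hne : S.Nonempty) (hbd : BddAbove S) :
    IsLUB S (sSup S) := by
  have h : S.Nonempty ∧ BddAbove S := ⟨hne, hbd⟩
  show IsLUB S (lrSSup S)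
  rw [lrSSup, dif_pos h]
  exact (exists_isLUB h.1 h.2).choose_spec

lemma isGLB_sInf {S : Set LongRay} (hne : S.Nonempty) : IsGLB S (sInf S) := by
  show IsGLB S (lrSInf S)
  rw [lrSInf, dif_pos hne]
  exact (exists_isGLB hne).choose_spec

instance : ConditionallyCompleteLinearOrder LongRay :=
  { (inferInstanceAs (LinearOrder LongRay) : LinearOrder LongRay),
    (inferInstanceAs (Lattice LongRay) : Lattice LongRay) with
    sSup := SupSet.sSup
    sInf := InfSet.sInf
    isLUB_csSup := fun s hne hbd => isLUB_sSup hne hbd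
    isGLB_csInf := fun s hne _ => isGLB_sInf hne
    csSup_of_not_bddAbove := fun s hs => by
      show lrSSup s = lrSSup ∅
      rw [lrSSup, lrSSup, dif_neg (by simp [hs]), dif_neg (by simp)]
    csInf_of_not_bddBelow := fun s hs => absurd (OrderBot.bddBelow s) hs }

open Filter in
lemma tendsto_aux (r : ℝ) : Tendsto (fun n : ℕ => r + (1-r)/(n+2)) atTop (nhds r) := by
  have h2 : Tendsto (fun n : ℕ => ((n:ℝ)+2)) atTop atTop :=
    tendsto_atTop_add_const_right atTop 2 tendsto_natCast_atTop_atTop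
  have h0 : Tendsto (fun n : ℕ => (1-r)/((n:ℝ)+2)) atTop (nhds 0) :=
    Tendsto.div_atTop tendsto_const_nhds h2
  simpa using tendsto_const_nhds.add h0

open Filter in
lemma tendsto_aux2 (r : ℝ) : Tendsto (fun n : ℕ => r - r/(n+2)) atTop (nhds r) := by
  have h2 : Tendsto (fun n : ℕ => ((n:ℝ)+2)) atTop atTop :=
    tendsto_atTop_add_const_right atTop 2 tendsto_natCast_atTop_atTop
  have h0 : Tendsto (fun n : ℕ => r/((n:ℝ)+2)) atTop (nhds 0) :=
    Tendsto.div_atTop tendsto_const_nhds h2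
  simpa using tendsto_const_nhds.sub h0

open Filter in
lemma right_approach (x : LongRay) :
    ∃ u : ℕ → LongRay, (∀ n, x < u n) ∧ Tendsto u atTop (nhds x) := by
  have hr0 := rp_nonneg x
  have hr1 := rp_lt_one x
  have hmem : ∀ n : ℕ, 0 ≤ rp x + (1 - rp x)/(n+2) ∧ rp x + (1 - rp x)/(n+2) < 1 := by
    intro n
    have hn : (0:ℝ) < (n:ℕ)+2 := by positivity
    constructor
    · have : (0:ℝ) < (1 - rp x)/(n+2) := div_pos (by linarith) hn
      linarith
    · have h3 : (1 - rp x)/(n+2) ≤ (1 - rp x)/2 := by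
        apply div_le_div_of_nonneg_left (by linarith) (by norm_num)
        exact_mod_cast by omega
      linarith
  refine ⟨fun n => mk (op x) (op_lt x) _ (hmem n), fun n => ?_, ?_⟩
  · refine lt_iff.2 (Or.inr ⟨rfl, ?_⟩)
    rw [rp_mk]
    have hn : (0:ℝ) < (n:ℕ)+2 := by positivity
    have : (0:ℝ) < (1 - rp x)/(n+2) := div_pos (by linarith) hn
    linarith
  · rw [tendsto_order]
    constructor
    · intro a ha
      filter_upwards with n
      refine lt_trans ha (lt_iff.2 (Or.inr ⟨rfl, ?_⟩))
      rw [rp_mk]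
      have hn : (0:ℝ) < (n:ℕ)+2 := by positivity
      have : (0:ℝ) < (1 - rp x)/(n+2) := div_pos (by linarith) hn
      linarith
    · intro b hb
      rcases lt_iff.1 hb with h | ⟨h1, h2⟩
      · filter_upwards with n
        exact lt_iff.2 (Or.inl h)
      · have := (tendsto_aux (rp x)).eventually_lt_const h2
        filter_upwards [this] with n hn
        exact lt_iff.2 (Or.inr ⟨h1, by rw [rp_mk]; exact hn⟩)

open Filter in
lemma left_approach (x : LongRay) (hx : x ≠ rayZero) :
    ∃ u : ℕ → LongRay, (∀ n, u n < x) ∧ Tendsto u atTop (nhds x) := by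
  rcases eq_or_ne (rp x) 0 with hr | hr
  · -- real part zero; ordinal part nonzero
    have hop : op x ≠ 0 := by
      intro h0
      apply hx
      have : x = mk (op x) (op_lt x) (rp x) (rp_mem x) := rfl
      rw [this]
      simp only [hr, h0]
      rfl
    rcases Ordinal.zero_or_succ_or_isSuccLimit (op x) with h | ⟨β, hβ⟩ | hlim
    · exact absurd h hop
    · -- successor
      replace hβ := hβ.symm
      have hβlt : β < Omega1 := lt_trans (hβ ▸ Order.lt_succ β) (op_lt x)
      have hmem : ∀ n : ℕ, 0 ≤ 1 - 1/((n:ℝ)+2) ∧ 1 - 1/((n:ℝ)+2) < 1 := by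
        intro n
        have hn : (0:ℝ) < (n:ℕ)+2 := by positivity
        constructor
        · have : 1/((n:ℝ)+2) ≤ 1/2 := by
            apply div_le_div_of_nonneg_left (by norm_num) (by norm_num)
            exact_mod_cast by omega
          linarith
        · have : (0:ℝ) < 1/((n:ℝ)+2) := by positivity
          linarith
      refine ⟨fun n => mk β hβlt _ (hmem n), fun n => ?_, ?_⟩
      · exact lt_iff.2 (Or.inl (by rw [op_mk, hβ]; exact Order.lt_succ β))
      · rw [tendsto_order]
        constructor
        · intro a ha
          rcases lt_iff.1 ha with h | ⟨h1, h2⟩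
          · rw [hβ, Order.lt_succ_iff] at h
            rcases lt_or_eq_of_le h with h' | h'
            · filter_upwards with n
              exact lt_iff.2 (Or.inl (by rw [op_mk]; exact h'))
            · have h2 : rp a < 1 := rp_lt_one a
              have htd : Tendsto (fun n : ℕ => 1 - 1/((n:ℝ)+2)) atTop (nhds 1) := by
                simpa using tendsto_aux2 1
              have := htd.eventually_const_lt h2
              filter_upwards [this] with n hn
              exact lt_iff.2 (Or.inr ⟨by rw [op_mk, h'], by rw [rp_mk]; exact hn⟩)
          · rw [hr] at h2
            exact absurd (lt_of_le_of_lt (rp_nonneg a) h2) (lt_irrefl _)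
        · intro b hb
          filter_upwards with n
          refine lt_trans ?_ hb
          exact lt_iff.2 (Or.inl (by rw [op_mk, hβ]; exact Order.lt_succ β))
    · -- limit ordinal
      have hcnt : Countable (Set.Iio (op x)) := by
        have h1 : Cardinal.mk (Set.Iio (op x)) < Cardinal.aleph 1 := by
          rw [Ordinal.mk_Iio_ordinal, Cardinal.lift_lt_aleph_one]
          exact Cardinal.lt_ord.1 (by rw [← omega1_eq_ord]; exact op_lt x)
        have h2 := (Cardinal.countable_iff_lt_aleph_one (Set.Iio (op x))).2 h1
        exact h2.to_subtype
      have hne : Nonempty (Set.Iio (op x)) := ⟨⟨0, pos_iff_ne_zero.2 hop⟩⟩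
      obtain ⟨g, hg⟩ := exists_surjective_nat (Set.Iio (op x))
      have hβlt : ∀ n : ℕ, Finset.sup (Finset.range (n+1)) (fun i => ((g i : Ordinal))) < op x := by
        intro n
        rw [Finset.sup_lt_iff (pos_iff_ne_zero.2 hop)]
        intro i _
        exact (g i).2
      refine ⟨fun n => mk (Finset.sup (Finset.range (n+1)) (fun i => ((g i : Ordinal))))
        (lt_trans (hβlt n) (op_lt x)) 0 ⟨le_refl _, one_pos⟩, fun n => ?_, ?_⟩
      · exact lt_iff.2 (Or.inl (by rw [op_mk]; exact hβlt n))
      · rw [tendsto_order]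
        constructor
        · intro a ha
          rcases lt_iff.1 ha with h | ⟨h1, h2⟩
          · have hsucc : Order.succ (op a) < op x := hlim.succ_lt h
            obtain ⟨i, hi⟩ := hg ⟨Order.succ (op a), hsucc⟩
            rw [eventually_atTop]
            refine ⟨i, fun n hn => ?_⟩
            refine lt_iff.2 (Or.inl ?_)
            rw [op_mk]
            have hle : ((g i : Ordinal)) ≤ Finset.sup (Finset.range (n+1)) (fun i => ((g i : Ordinal))) :=
              Finset.le_sup (f := fun i => ((g i : Ordinal))) (Finset.mem_range.2 (Nat.lt_succ_of_le hn))
            rw [hi] at hle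
            exact lt_of_lt_of_le (Order.lt_succ (op a)) hle
          · rw [hr] at h2
            exact absurd (lt_of_le_of_lt (rp_nonneg a) h2) (lt_irrefl _)
        · intro b hb
          filter_upwards with n
          exact lt_trans (lt_iff.2 (Or.inl (by rw [op_mk]; exact hβlt n))) hb
  · -- real part nonzero
    have hrpos : 0 < rp x := lt_of_le_of_ne (rp_nonneg x) (Ne.symm hr)
    have hmem : ∀ n : ℕ, 0 ≤ rp x - rp x/((n:ℝ)+2) ∧ rp x - rp x/((n:ℝ)+2) < 1 := by
      intro n
      have hn : (0:ℝ) < (n:ℕ)+2 := by positivity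
      have hpos : 0 < rp x/((n:ℝ)+2) := div_pos hrpos hn
      have hle : rp x/((n:ℝ)+2) ≤ rp x := by
        apply div_le_self (le_of_lt hrpos)
        exact_mod_cast by omega
      exact ⟨by linarith, by linarith [rp_lt_one x]⟩
    refine ⟨fun n => mk (op x) (op_lt x) _ (hmem n), fun n => ?_, ?_⟩
    · refine lt_iff.2 (Or.inr ⟨rfl, ?_⟩)
      rw [rp_mk]
      have hn : (0:ℝ) < (n:ℕ)+2 := by positivity
      have : (0:ℝ) < rp x/((n:ℝ)+2) := div_pos hrpos hn
      linarith
    · rw [tendsto_order]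
      constructor
      · intro a ha
        rcases lt_iff.1 ha with h | ⟨h1, h2⟩
        · filter_upwards with n
          exact lt_iff.2 (Or.inl (by rw [op_mk]; exact h))
        · have := (tendsto_aux2 (rp x)).eventually_const_lt h2
          filter_upwards [this] with n hn
          exact lt_iff.2 (Or.inr ⟨by rw [op_mk, h1], by rw [rp_mk]; exact hn⟩)
      · intro b hb
        filter_upwards with n
        refine lt_trans ?_ hb
        refine lt_iff.2 (Or.inr ⟨rfl, ?_⟩)
        rw [rp_mk]
        have hn : (0:ℝ) < (n:ℕ)+2 := by positivity
        have : (0:ℝ) < rp x/((n:ℝ)+2) := div_pos hrpos hn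
        linarith

open Filter Topology

section Core

variable {G : LongRay × LongRay → LongRay}

lemma square_bound (hG : Continuous G) (M : LongRay) :
    ∃ c, ∀ p : LongRay × LongRay, p.1 ≤ M → p.2 ≤ M → G p ≤ c := by
  have hcomp : IsCompact ((Set.Icc (⊥:LongRay) M) ×ˢ (Set.Icc (⊥:LongRay) M)) :=
    isCompact_Icc.prod isCompact_Icc
  obtain ⟨c, hc⟩ := hcomp.bddAbove_image hG.continuousOn
  exact ⟨c, fun p h1 h2 => hc (Set.mem_image_of_mem _ ⟨⟨bot_le, h1⟩, ⟨bot_le, h2⟩⟩)⟩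

lemma pick_point {U : Set (LongRay × LongRay)} (hU : ¬ BddAbove (G '' U)) (m : LongRay) :
    ∃ p, p ∈ U ∧ m < G p := by
  obtain ⟨y, hy, hlt⟩ := not_bddAbove_iff.1 hU m
  obtain ⟨p, hp, rfl⟩ := hy
  exact ⟨p, hp, hlt⟩

/-- If `G` is unbounded on a sequence of strips squeezing to height `t0`, then `G`
takes arbitrarily large values on the horizontal line at height `t0`. -/
lemma line_unbounded_of_strips (hG : Continuous G) (t0 : LongRay) (a b : ℕ → LongRay)
    (ha : Tendsto a atTop (nhds t0)) (hb : Tendsto b atTop (nhds t0))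
    (U : ℕ → Set (LongRay × LongRay)) (hU2 : ∀ k p, p ∈ U k → a k ≤ p.2 ∧ p.2 ≤ b k)
    (hUu : ∀ k, ¬ BddAbove (G '' U k)) (c : LongRay) :
    ∃ s, c < G (s, t0) := by
  classical
  obtain ⟨B, hB⟩ := bddAbove_of_countable ((Set.countable_range b).union (Set.countable_singleton t0))
  have hBb : ∀ k, b k ≤ B := fun k => hB (Or.inl ⟨k, rfl⟩)
  set sq : LongRay → LongRay := fun M => (square_bound hG M).choose with hsqdef
  have hsq : ∀ M, ∀ p : LongRay × LongRay, p.1 ≤ M → p.2 ≤ M → G p ≤ sq M :=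
    fun M => (square_bound hG M).choose_spec
  set base : LongRay := B ⊔ c with hbase
  set thr : LongRay → LongRay := fun m => sq (base ⊔ m) ⊔ (base ⊔ m) with hthrdef
  set F : ℕ → LongRay × LongRay := fun k =>
    Nat.rec ((pick_point (hUu 0) (thr ⊥)).choose)
      (fun k ih => (pick_point (hUu (k+1)) (thr ih.1)).choose) k with hFdef
  have hF0 : F 0 ∈ U 0 ∧ thr ⊥ < G (F 0) := (pick_point (hUu 0) (thr ⊥)).choose_spec
  have hFs : ∀ k, F (k+1) ∈ U (k+1) ∧ thr (F k).1 < G (F (k+1)) :=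
    fun k => (pick_point (hUu (k+1)) (thr (F k).1)).choose_spec
  have hmem : ∀ k, F k ∈ U k := by rintro (_|k); exacts [hF0.1, (hFs k).1]
  have hht : ∀ k, a k ≤ (F k).2 ∧ (F k).2 ≤ b k := fun k => hU2 k _ (hmem k)
  have hhtB : ∀ k, (F k).2 ≤ B := fun k => (hht k).2.trans (hBb k)
  have hesc : ∀ k (m : LongRay), thr m < G (F k) → base ⊔ m < (F k).1 := by
    intro k m hthrlt
    by_contra hle
    rw [not_lt] at hle
    have h1 : G (F k) ≤ sq (base ⊔ m) :=
      hsq (base ⊔ m) (F k) hle ((hhtB k).trans (le_trans le_sup_left le_sup_left))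
    exact absurd hthrlt (not_lt.2 (h1.trans le_sup_left))
  have hs0 : base < (F 0).1 := lt_of_le_of_lt le_sup_left (hesc 0 ⊥ hF0.2)
  have hstep : ∀ k, (F k).1 < (F (k+1)).1 :=
    fun k => lt_of_le_of_lt le_sup_right (hesc (k+1) (F k).1 (hFs k).2)
  have hmono : StrictMono (fun k => (F k).1) := strictMono_nat_of_lt_succ hstep
  have hbdd : BddAbove (Set.range fun k => (F k).1) := bddAbove_of_countable (Set.countable_range _)
  set σ := ⨆ k, (F k).1 with hσ
  have hstend : Tendsto (fun k => (F k).1) atTop (nhds σ) := tendsto_atTop_ciSup hmono.monotone hbdd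
  have httend : Tendsto (fun k => (F k).2) atTop (nhds t0) :=
    tendsto_of_tendsto_of_tendsto_of_le_of_le ha hb (fun k => (hht k).1) (fun k => (hht k).2)
  have hFt : Tendsto F atTop (nhds (σ, t0)) := by
    have := hstend.prodMk_nhds httend
    simpa using this
  have hGt : Tendsto (fun k => G (F k)) atTop (nhds (G (σ, t0))) := (hG.tendsto _).comp hFt
  have hvle : ∀ j, (F j).1 ≤ G (σ, t0) := by
    intro j
    refine ge_of_tendsto (hGt.comp (tendsto_add_atTop_nat 1)) ?_
    rw [eventually_atTop]
    refine ⟨j, fun k hk => ?_⟩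
    have h1 : (F j).1 ≤ (F k).1 := hmono.monotone hk
    have h2 : (F k).1 < G (F (k+1)) :=
      lt_of_le_of_lt (le_trans le_sup_right le_sup_right) (hFs k).2
    exact h1.trans h2.le
  refine ⟨σ, ?_⟩
  have hcσ : c < σ :=
    lt_of_lt_of_le (lt_of_le_of_lt le_sup_right hs0) (le_ciSup hbdd 0)
  exact lt_of_lt_of_le hcσ (ciSup_le hvle)

/-- If `G` takes values `≥ w` at points below the diagonal of unbounded height, then it
takes a value `≥ w` on the diagonal. -/
lemma diag_high (hG : Continuous G) (w : LongRay)
    (h : ∀ c, ∃ p : LongRay × LongRay, p.2 ≤ p.1 ∧ c < p.2 ∧ w ≤ G p) :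
    ∃ x, w ≤ G (x, x) := by
  classical
  set F : ℕ → LongRay × LongRay := fun k =>
    Nat.rec ((h ⊥).choose) (fun _ ih => (h ih.1).choose) k with hFdef
  have hF0 : (F 0).2 ≤ (F 0).1 ∧ ⊥ < (F 0).2 ∧ w ≤ G (F 0) := (h ⊥).choose_spec
  have hFs : ∀ k, (F (k+1)).2 ≤ (F (k+1)).1 ∧ (F k).1 < (F (k+1)).2 ∧ w ≤ G (F (k+1)) :=
    fun k => (h (F k).1).choose_spec
  have hstep : ∀ k, (F k).1 < (F (k+1)).1 := fun k => lt_of_lt_of_le (hFs k).2.1 (hFs k).1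
  have hmono : StrictMono fun k => (F k).1 := strictMono_nat_of_lt_succ hstep
  have hbdd : BddAbove (Set.range fun k => (F k).1) := bddAbove_of_countable (Set.countable_range _)
  set σ := ⨆ k, (F k).1 with hσ
  have hstend : Tendsto (fun k => (F k).1) atTop (nhds σ) := tendsto_atTop_ciSup hmono.monotone hbdd
  have hstend1 : Tendsto (fun k => (F (k+1)).1) atTop (nhds σ) :=
    hstend.comp (tendsto_add_atTop_nat 1)
  have httend : Tendsto (fun k => (F (k+1)).2) atTop (nhds σ) :=
    tendsto_of_tendsto_of_tendsto_of_le_of_le hstend hstend1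
      (fun k => ((hFs k).2.1.le)) (fun k => (hFs k).1)
  have hFt : Tendsto (fun k => F (k+1)) atTop (nhds (σ, σ)) := by
    have := hstend1.prodMk_nhds httend
    simpa using this
  have hGt : Tendsto (fun k => G (F (k+1))) atTop (nhds (G (σ, σ))) := (hG.tendsto _).comp hFt
  exact ⟨σ, ge_of_tendsto hGt (Eventually.of_forall fun k => (hFs k).2.2)⟩

/-- Core lemma: a continuous map on the square of the long ray which is bounded on the
diagonal is bounded on the bottom line. -/
theorem core_bounded (hG : Continuous G) (z : LongRay) (hdiag : ∀ t, G (t, t) ≤ z)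
    (hline : ¬ BddAbove (G '' {p : LongRay × LongRay | p.2 = ⊥})) : False := by
  classical
  set sq : LongRay → LongRay := fun M => (square_bound hG M).choose with hsqdef
  have hsq : ∀ M, ∀ p : LongRay × LongRay, p.1 ≤ M → p.2 ≤ M → G p ≤ sq M :=
    fun M => (square_bound hG M).choose_spec
  obtain ⟨w₀, hw₀⟩ := exists_gt z
  -- heights of high points are bounded
  have hb0 : ∃ b₀, ∀ p : LongRay × LongRay, p.2 ≤ p.1 → w₀ ≤ G p → p.2 ≤ b₀ := by
    by_contra hcon
    push_neg at hcon
    have : ∀ c, ∃ p : LongRay × LongRay, p.2 ≤ p.1 ∧ c < p.2 ∧ w₀ ≤ G p := by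
      intro c
      obtain ⟨p, h1, h2, h3⟩ := hcon c
      exact ⟨p, h1, h3, h2⟩
    obtain ⟨x, hx⟩ := diag_high hG w₀ this
    exact absurd hw₀ (not_lt.2 (hx.trans (hdiag x)))
  obtain ⟨b₀, hb₀⟩ := hb0
  set reg : LongRay → Set (LongRay × LongRay) :=
    fun t => {p | t ≤ p.2 ∧ p.2 ≤ b₀ ∧ p.2 ≤ p.1} with hregdef
  have hregmono : ∀ {t t'}, t ≤ t' → reg t' ⊆ reg t :=
    fun h p hp => ⟨h.trans hp.1, hp.2.1, hp.2.2⟩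
  have hU0 : ¬ BddAbove (G '' reg ⊥) := by
    intro hbd
    refine hline (hbd.mono (Set.image_mono ?_))
    rintro p hp
    rw [Set.mem_setOf_eq] at hp
    exact ⟨hp.ge, hp.le.trans bot_le, hp.le.trans bot_le⟩
  set T : Set LongRay := {t | t ≤ b₀ ∧ ¬ BddAbove (G '' reg t)} with hTdef
  have hTne : T.Nonempty := ⟨⊥, bot_le, hU0⟩
  have hTbd : BddAbove T := ⟨b₀, fun t ht => ht.1⟩
  set t1 : LongRay := sSup T with ht1def
  have ht1b : t1 ≤ b₀ := csSup_le hTne (fun t ht => ht.1)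
  have hup : ∀ t, t1 < t → t ≤ b₀ → BddAbove (G '' reg t) := by
    intro t h1 h2
    by_contra hcon
    exact absurd (le_csSup hTbd ⟨h2, hcon⟩) (not_le.2 h1)
  have hdown : ∀ t, t < t1 → ¬ BddAbove (G '' reg t) := by
    intro t ht hcon
    obtain ⟨t', ht'T, htt'⟩ := exists_lt_of_lt_csSup hTne ht
    exact ht'T.2 (hcon.mono (Set.image_mono (hregmono htt'.le)))
  -- the line at height b₀ is bounded
  have hregb0 : BddAbove (G '' reg b₀) := by
    refine ⟨sq b₀ ⊔ w₀, ?_⟩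
    rintro y ⟨p, ⟨h1, h2, h3⟩, rfl⟩
    have hp2 : p.2 = b₀ := le_antisymm h2 h1
    rcases eq_or_lt_of_le h3 with heq | hlt
    · have hpd : p = (p.2, p.2) := by
        rw [Prod.ext_iff]
        exact ⟨heq.symm, rfl⟩
      rw [hpd]
      exact le_sup_of_le_right ((hdiag p.2).trans hw₀.le)
    · obtain ⟨u, hu, hut⟩ := right_approach p.2
      have htd : Tendsto (fun m => G (p.1, u m)) atTop (nhds (G (p.1, p.2))) := by
        have h5 : Tendsto (fun m => ((p.1 : LongRay), u m)) atTop (nhds (p.1, p.2)) :=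
          tendsto_const_nhds.prodMk_nhds hut
        exact (hG.tendsto _).comp h5
      have hGp : G (p.1, p.2) ≤ w₀ := by
        refine le_of_tendsto htd ?_
        filter_upwards [hut.eventually_lt_const hlt] with m hm
        by_contra hc
        rw [not_le] at hc
        have := hb₀ (p.1, u m) hm.le hc.le
        rw [hp2] at hu
        exact absurd this (not_le.2 (hu m))
      have : p = (p.1, p.2) := rfl
      rw [this]
      exact le_sup_of_le_right hGp
  -- G is unbounded on `reg t1`
  have hT1 : ¬ BddAbove (G '' reg t1) := by
    intro hbdd
    have ht1ne : t1 ≠ rayZero := by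
      intro h0
      rw [h0] at hbdd
      exact hU0 hbdd
    obtain ⟨l, hl, hlt⟩ := left_approach t1 ht1ne
    set U : ℕ → Set (LongRay × LongRay) := fun n => {p ∈ reg (l n) | p.2 ≤ t1} with hUdef
    have hUu : ∀ n, ¬ BddAbove (G '' U n) := by
      intro n hbn
      have hregsplit : reg (l n) ⊆ U n ∪ reg t1 := by
        intro p hp
        rcases le_or_gt p.2 t1 with h | h
        · exact Or.inl ⟨hp, h⟩
        · exact Or.inr ⟨h.le, hp.2.1, hp.2.2⟩
      have : BddAbove (G '' (U n ∪ reg t1)) := by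
        rw [Set.image_union]
        exact hbn.union hbdd
      exact hdown (l n) (hl n) (this.mono (Set.image_mono hregsplit))
    have := line_unbounded_of_strips hG t1 l (fun _ => t1) hlt tendsto_const_nhds U
      (fun n p hp => ⟨hp.1.1, hp.2⟩) hUu
    obtain ⟨m, hm⟩ := hbdd
    obtain ⟨s, hs⟩ := this (m ⊔ sq t1)
    rcases le_or_gt t1 s with hcase | hcase
    · have : G (s, t1) ≤ m := hm ⟨(s, t1), ⟨le_refl _, ht1b, hcase⟩, rfl⟩
      exact absurd hs (not_lt.2 (this.trans le_sup_left))
    · have : G (s, t1) ≤ sq t1 := hsq t1 (s, t1) hcase.le (le_refl _)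
      exact absurd hs (not_lt.2 (this.trans le_sup_right))
  have ht1ltb : t1 < b₀ := by
    rcases eq_or_lt_of_le ht1b with h | h
    · rw [h] at hT1
      exact absurd hregb0 hT1
    · exact h
  -- approach from above
  obtain ⟨v, hv, hvt⟩ := right_approach t1
  set v' : ℕ → LongRay := fun n => v n ⊓ b₀ with hv'def
  have hv'gt : ∀ n, t1 < v' n := fun n => lt_min (hv n) ht1ltb
  have hv'le : ∀ n, v' n ≤ b₀ := fun n => min_le_right _ _
  have hv't : Tendsto v' atTop (nhds t1) :=
    tendsto_of_tendsto_of_tendsto_of_le_of_le tendsto_const_nhds hvt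
      (fun n => (hv'gt n).le) (fun n => min_le_left _ _)
  -- the line at height t1 is unbounded
  have hlineT1 : ∀ c, ∃ s, c < G (s, t1) := by
    set U : ℕ → Set (LongRay × LongRay) := fun n => {p ∈ reg t1 | p.2 ≤ v' n} with hUdef
    have hUu : ∀ n, ¬ BddAbove (G '' U n) := by
      intro n hbn
      have hregsplit : reg t1 ⊆ U n ∪ reg (v' n) := by
        intro p hp
        rcases le_or_gt p.2 (v' n) with h | h
        · exact Or.inl ⟨hp, h⟩
        · exact Or.inr ⟨h.le, hp.2.1, hp.2.2⟩
      have : BddAbove (G '' (U n ∪ reg (v' n))) := by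
        rw [Set.image_union]
        exact hbn.union (hup (v' n) (hv'gt n) (hv'le n))
      exact hT1 (this.mono (Set.image_mono hregsplit))
    exact line_unbounded_of_strips hG t1 (fun _ => t1) v' tendsto_const_nhds hv't U
      (fun n p hp => ⟨hp.1.1, hp.2⟩) hUu
  -- final contradiction
  have hcn : ∀ n, ∃ cn, ∀ y ∈ G '' reg (v' n), y ≤ cn := by
    intro n
    obtain ⟨cn, hcn⟩ := hup (v' n) (hv'gt n) (hv'le n)
    exact ⟨cn, fun y hy => hcn hy⟩
  set cn : ℕ → LongRay := fun n => (hcn n).choose with hcndef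
  have hcns : ∀ n, ∀ y ∈ G '' reg (v' n), y ≤ cn n := fun n => (hcn n).choose_spec
  obtain ⟨C0, hC0⟩ := bddAbove_of_countable (Set.countable_range cn)
  set C : LongRay := C0 ⊔ sq b₀ with hCdef
  obtain ⟨s, hs⟩ := hlineT1 C
  have hsb : b₀ < s := by
    by_contra hc
    rw [not_lt] at hc
    have : G (s, t1) ≤ sq b₀ := hsq b₀ (s, t1) hc ht1b
    exact absurd hs (not_lt.2 (this.trans le_sup_right))
  -- an open set of heights with large G values
  have hVopen : IsOpen {u : LongRay | C < G (s, u)} := by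
    have hcont : Continuous (fun u : LongRay => G (s, u)) :=
      hG.comp (continuous_const.prodMk continuous_id)
    exact isOpen_Ioi.preimage hcont
  have hVmem : t1 ∈ {u : LongRay | C < G (s, u)} := hs
  have hne : ({u : LongRay | C < G (s, u)} ∩ Set.Ioo t1 b₀).Nonempty := by
    have h1 : {u : LongRay | C < G (s, u)} ∈ nhds t1 := hVopen.mem_nhds hVmem
    have h2 : Set.Ioo t1 b₀ ∈ nhdsWithin t1 (Set.Ioi t1) := by
      rw [mem_nhdsWithin]
      exact ⟨Set.Iio b₀, isOpen_Iio, ht1ltb, fun x hx => ⟨hx.2, hx.1⟩⟩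
    have h3 : {u : LongRay | C < G (s, u)} ∩ Set.Ioo t1 b₀ ∈ nhdsWithin t1 (Set.Ioi t1) :=
      Filter.inter_mem (mem_nhdsWithin_of_mem_nhds h1) h2
    exact Filter.nonempty_of_mem h3
  obtain ⟨u, huV, hu1, hu2⟩ := hne
  obtain ⟨n, hn⟩ := (hv't.eventually_lt_const hu1).exists
  have hureg : (s, u) ∈ reg (v' n) := ⟨hn.le, hu2.le, (hu2.trans hsb).le⟩
  have : G (s, u) ≤ cn n := hcns n _ (Set.mem_image_of_mem _ hureg)
  have hcc : cn n ≤ C := le_trans (hC0 ⟨n, rfl⟩) le_sup_left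
  exact absurd huV (not_lt.2 (this.trans hcc))

end Core

section Main

variable {n : ℕ}

lemma delta_empty_bdd (f : (Fin n → LongRay) → LongRay) :
    BddAbove (f '' Delta n ∅ (fun _ => rayZero)) := by
  have hsub : Delta n ∅ (fun _ => rayZero) ⊆ {fun _ => rayZero} := by
    intro x hx
    have := hx.2
    have hx' : x = fun _ => rayZero := funext fun j => hx.2 j (Finset.notMem_empty j)
    exact hx'
  exact (bddAbove_singleton (a := f fun _ => rayZero)).mono
    ((Set.image_mono (f := f) hsub).trans (by rw [Set.image_singleton]))

open Classical in
/-- the auxiliary two-variable map associated to `I ⊆ J` -/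
def phiIJ (I J : Finset (Fin n)) (p : LongRay × LongRay) : Fin n → LongRay :=
  fun i => if i ∈ I then p.1 else if i ∈ J then p.2 else rayZero

open Classical in
lemma phiIJ_cont (I J : Finset (Fin n)) : Continuous (phiIJ I J) := by
  refine continuous_pi fun i => ?_
  by_cases h1 : i ∈ I
  · simpa [phiIJ, h1] using continuous_fst
  · by_cases h2 : i ∈ J
    · simpa [phiIJ, h1, h2] using continuous_snd
    · simpa [phiIJ, h1, h2] using continuous_const

lemma icofinal_upward {f : (Fin n → LongRay) → LongRay} (hf : Continuous f)
    {I J : Finset (Fin n)} (hIJ : I ⊆ J) (hI : ICofinal n f I) : ICofinal n f J := by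
  classical
  intro hbdd
  obtain ⟨z, hz⟩ := hbdd
  rcases Finset.eq_empty_or_nonempty I with rfl | ⟨i₀, hi₀⟩
  · exact hI (delta_empty_bdd f)
  set G : LongRay × LongRay → LongRay := fun p => f (phiIJ I J p) with hGdef
  have hG : Continuous G := hf.comp (phiIJ_cont I J)
  have hdiag : ∀ t, G (t, t) ≤ z := by
    intro t
    refine hz (Set.mem_image_of_mem f ?_)
    constructor
    · intro i hi i' hi'
      simp only [phiIJ]
      by_cases h1 : i ∈ I <;> by_cases h2 : i' ∈ I <;> simp [h1, h2, hi, hi']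
    · intro j hj
      have hjI : j ∉ I := fun h => hj (hIJ h)
      simp [phiIJ, hjI, hj]
  have hline : ¬ BddAbove (G '' {p : LongRay × LongRay | p.2 = ⊥}) := by
    intro hbd
    obtain ⟨m, hm⟩ := hbd
    apply hI
    refine ⟨m, ?_⟩
    rintro y ⟨x, hx, rfl⟩
    have hxeq : x = phiIJ I J (x i₀, ⊥) := by
      funext i
      by_cases h1 : i ∈ I
      · simp only [phiIJ, h1, if_true]
        exact hx.1 i h1 i₀ hi₀
      · by_cases h2 : i ∈ J
        · simp only [phiIJ, h1, if_false, h2, if_true]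
          exact hx.2 i h1
        · simp only [phiIJ, h1, if_false, h2]
          exact hx.2 i h1
    have : f x = G (x i₀, ⊥) := by conv_lhs => rw [hxeq]
    rw [this]
    exact hm (Set.mem_image_of_mem G rfl)
  exact core_bounded hG z hdiag hline

/-- min of the coordinates in `I` (bottom if `I = ∅`). -/
def minOn (I : Finset (Fin n)) (x : Fin n → LongRay) : LongRay :=
  if h : I.Nonempty then I.inf' h x else rayZero

lemma minOn_cont (I : Finset (Fin n)) : Continuous (fun x : Fin n → LongRay => minOn I x) := by
  by_cases h : I.Nonempty
  · simp only [minOn, dif_pos h]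
    induction h using Finset.Nonempty.cons_induction with
    | singleton i => simpa using continuous_apply i
    | cons i s hi hs ih =>
        have heq : (fun x : Fin n → LongRay => (Finset.cons i s hi).inf' (Finset.cons_nonempty hi) x)
            = fun x => min (x i) (s.inf' hs x) := by
          funext x
          rw [Finset.inf'_cons]
        rw [heq]
        exact (continuous_apply i).min ih
  · simp only [minOn, dif_neg h]
    exact continuous_const

lemma minOn_le {I : Finset (Fin n)} {i : Fin n} (hi : i ∈ I) (x : Fin n → LongRay) :
    minOn I x ≤ x i := by
  rw [minOn, dif_pos ⟨i, hi⟩]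
  exact Finset.inf'_le _ hi

lemma le_minOn {I : Finset (Fin n)} (h : I.Nonempty) {c : LongRay} (x : Fin n → LongRay)
    (hc : ∀ i ∈ I, c ≤ x i) : c ≤ minOn I x := by
  rw [minOn, dif_pos h]
  exact Finset.le_inf' h _ hc

open Classical in
/-- The canonical continuous function with cofinality class `𝔍`. -/
def famF (𝔍 : Set (Finset (Fin n))) : (Fin n → LongRay) → LongRay :=
  fun x => ((Set.toFinite 𝔍).toFinset).sup (fun I => minOn I x)

open Classical in
lemma famF_cont (𝔍 : Set (Finset (Fin n))) : Continuous (famF 𝔍) := by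
  unfold famF
  generalize (Set.toFinite 𝔍).toFinset = S
  induction S using Finset.cons_induction with
  | empty => simpa using continuous_const
  | cons I S hI ih =>
      have : (fun x : Fin n → LongRay => (Finset.cons I S hI).sup (fun J => minOn J x))
          = fun x => max (minOn I x) (S.sup (fun J => minOn J x)) := by
        funext x
        rw [Finset.sup_cons]
      rw [this]
      exact (minOn_cont I).max ih

open Classical in
lemma cofClass_famF {𝔍 : Set (Finset (Fin n))} (hemp : ∅ ∉ 𝔍)
    (hup : ∀ I ∈ 𝔍, ∀ J : Finset (Fin n), I ⊆ J → J ∈ 𝔍) :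
    cofClass n (famF 𝔍) = 𝔍 := by
  ext J
  constructor
  · -- contrapositive: J ∉ 𝔍 gives boundedness
    intro hJ
    by_contra hJ𝔍
    apply hJ
    refine ⟨rayZero, ?_⟩
    rintro y ⟨x, hx, rfl⟩
    show Finset.sup _ _ ≤ _
    apply Finset.sup_le
    intro I hI
    rw [Set.Finite.mem_toFinset] at hI
    have hInotsub : ¬ I ⊆ J := fun hsub => hJ𝔍 (hup I hI J hsub)
    obtain ⟨i, hiI, hiJ⟩ := Finset.not_subset.1 hInotsub
    have := minOn_le hiI x
    rw [hx.2 i hiJ] at this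
    exact this
  · intro hJ𝔍
    have hJne : J.Nonempty := Finset.nonempty_of_ne_empty (fun h => hemp (h ▸ hJ𝔍))
    intro hbdd
    obtain ⟨m, hm⟩ := hbdd
    obtain ⟨t, ht⟩ := exists_gt m
    set x : Fin n → LongRay := fun i => if i ∈ J then t else rayZero with hxdef
    have hxmem : x ∈ Delta n J (fun _ => rayZero) := by
      constructor
      · intro i hi i' hi'
        simp [hxdef, hi, hi']
      · intro j hj
        simp [hxdef, hj]
    have h1 : t ≤ famF 𝔍 x := by
      have h2 : t ≤ minOn J x := le_minOn hJne x (fun i hi => by simp [hxdef, hi])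
      refine h2.trans ?_
      exact Finset.le_sup (f := fun I => minOn I x) ((Set.Finite.mem_toFinset _).2 hJ𝔍)
    have := hm (Set.mem_image_of_mem (famF 𝔍) hxmem)
    exact absurd (h1.trans this) (not_le.2 ht)

end Main

end LongRayAux

/-- a family `𝔍` of subsets of `N` is the cofinality class of some
continuous map iff it consists of nonempty sets and is upward closed; consequently
the cofinality classes are in bijection with the antichains of `𝒫(N) \ {∅}`, each
class corresponding to the antichain of its minimal elements. -/
theorem cofClass_characterization_and_antichain_bijection (n : ℕ) :
    (∀ 𝔍 : Set (Finset (Fin n)),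
      (∃ f : (Fin n → LongRay) → LongRay, Continuous f ∧ cofClass n f = 𝔍) ↔
        (∅ ∉ 𝔍 ∧ ∀ I ∈ 𝔍, ∀ J : Finset (Fin n), I ⊆ J → J ∈ 𝔍)) ∧
    ∃ e : {𝔍 : Set (Finset (Fin n)) //
            ∃ f : (Fin n → LongRay) → LongRay, Continuous f ∧ cofClass n f = 𝔍} ≃
          {A : Set (Finset (Fin n)) // IsAntichain (· ⊆ ·) A ∧ ∅ ∉ A},
      ∀ 𝔍, ((e 𝔍 : {A : Set (Finset (Fin n)) // IsAntichain (· ⊆ ·) A ∧ ∅ ∉ A}) :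
              Set (Finset (Fin n))) =
            {I | I ∈ (𝔍 : Set (Finset (Fin n))) ∧
                 ∀ J ∈ (𝔍 : Set (Finset (Fin n))), J ⊆ I → J = I} := by
  classical
  have hiff : ∀ 𝔍 : Set (Finset (Fin n)),
      (∃ f : (Fin n → LongRay) → LongRay, Continuous f ∧ cofClass n f = 𝔍) ↔
        (∅ ∉ 𝔍 ∧ ∀ I ∈ 𝔍, ∀ J : Finset (Fin n), I ⊆ J → J ∈ 𝔍) := by
    intro 𝔍
    constructor
    · rintro ⟨f, hf, rfl⟩
      constructor
      · intro h
        exact h (LongRayAux.delta_empty_bdd f)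
      · intro I hI J hIJ
        exact LongRayAux.icofinal_upward hf hIJ hI
    · rintro ⟨h1, h2⟩
      exact ⟨LongRayAux.famF 𝔍, LongRayAux.famF_cont 𝔍, LongRayAux.cofClass_famF h1 h2⟩
  refine ⟨hiff, ?_⟩
  set Min : Set (Finset (Fin n)) → Set (Finset (Fin n)) :=
    fun 𝔍 => {I | I ∈ 𝔍 ∧ ∀ J ∈ 𝔍, J ⊆ I → J = I} with hMin
  set Up : Set (Finset (Fin n)) → Set (Finset (Fin n)) :=
    fun A => {J | ∃ I ∈ A, I ⊆ J} with hUp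
  have hminexists : ∀ (𝔍 : Set (Finset (Fin n))) (J : Finset (Fin n)), J ∈ 𝔍 →
      ∃ I, I ∈ Min 𝔍 ∧ I ⊆ J := by
    intro 𝔍
    have key : ∀ (m : ℕ) (J : Finset (Fin n)), J.card ≤ m → J ∈ 𝔍 →
        ∃ I, I ∈ Min 𝔍 ∧ I ⊆ J := by
      intro m
      induction m with
      | zero =>
        intro J hc hJ
        refine ⟨J, ⟨hJ, ?_⟩, subset_rfl⟩
        intro K hK hKJ
        have hJ0 : J = ∅ := Finset.card_eq_zero.1 (Nat.le_zero.1 hc)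
        rw [hJ0] at hKJ ⊢
        exact Finset.subset_empty.1 hKJ
      | succ m ih =>
        intro J hc hJ
        by_cases hmin : ∀ K ∈ 𝔍, K ⊆ J → K = J
        · exact ⟨J, ⟨hJ, hmin⟩, subset_rfl⟩
        · push_neg at hmin
          obtain ⟨K, hK, hKJ, hne⟩ := hmin
          have hss : K ⊂ J := ssubset_of_subset_of_ne hKJ hne
          have hcard : K.card ≤ m :=
            Nat.lt_succ_iff.1 (lt_of_lt_of_le (Finset.card_lt_card hss) hc)
          obtain ⟨I, hImin, hIK⟩ := ih K hcard hK
          exact ⟨I, hImin, hIK.trans hKJ⟩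
    exact fun J hJ => key J.card J le_rfl hJ
  have hMinAnti : ∀ 𝔍 : {𝔍 : Set (Finset (Fin n)) //
        ∃ f : (Fin n → LongRay) → LongRay, Continuous f ∧ cofClass n f = 𝔍},
      IsAntichain (· ⊆ ·) (Min 𝔍.1) ∧ ∅ ∉ Min 𝔍.1 := by
    rintro ⟨𝔍, h𝔍⟩
    obtain ⟨hemp, hupc⟩ := (hiff 𝔍).1 h𝔍
    constructor
    · intro a ha b hb hne hab
      exact hne (hb.2 a ha.1 hab)
    · intro h
      exact hemp h.1
  have hUpGood : ∀ A : {A : Set (Finset (Fin n)) // IsAntichain (· ⊆ ·) A ∧ ∅ ∉ A},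
      ∃ f : (Fin n → LongRay) → LongRay, Continuous f ∧ cofClass n f = Up A.1 := by
    rintro ⟨A, hA1, hA2⟩
    refine (hiff _).2 ⟨?_, ?_⟩
    · rintro ⟨I, hIA, hIe⟩
      exact hA2 ((Finset.subset_empty.1 hIe) ▸ hIA)
    · rintro I ⟨I0, hI0, hI0I⟩ J hIJ
      exact ⟨I0, hI0, hI0I.trans hIJ⟩
  refine ⟨⟨fun 𝔍 => ⟨Min 𝔍.1, hMinAnti 𝔍⟩, fun A => ⟨Up A.1, hUpGood A⟩, ?_, ?_⟩, ?_⟩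
  · rintro ⟨𝔍, h𝔍⟩
    obtain ⟨hemp, hupc⟩ := (hiff 𝔍).1 h𝔍
    apply Subtype.ext
    show Up (Min 𝔍) = 𝔍
    ext J
    constructor
    · rintro ⟨I, hI, hIJ⟩
      exact hupc I hI.1 J hIJ
    · intro hJ
      obtain ⟨I, hImin, hIJ⟩ := hminexists 𝔍 J hJ
      exact ⟨I, hImin, hIJ⟩
  · rintro ⟨A, hA1, hA2⟩
    apply Subtype.ext
    show Min (Up A) = A
    ext I
    constructor
    · rintro ⟨⟨I0, hI0A, hI0I⟩, hminI⟩
      have h0 : I0 = I := hminI I0 ⟨I0, hI0A, subset_rfl⟩ hI0I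
      exact h0 ▸ hI0A
    · intro hIA
      refine ⟨⟨I, hIA, subset_rfl⟩, ?_⟩
      rintro K ⟨I1, hI1A, hI1K⟩ hKI
      have hI1I : I1 ⊆ I := hI1K.trans hKI
      have h1 : I1 = I := by
        by_contra hne
        exact hA1 hI1A hIA hne hI1I
      exact Finset.Subset.antisymm hKI (h1 ▸ hI1K)
  · intro 𝔍
    rfl
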